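/- Let 𝒮 ⊆ 𝓑(M) be a distinguished set of abstract boundary points, let A ⊆ M be a singularly compact set, and let σ : [0, b) → M (0 < b ≤ ∞) be a continuous curve whose image is contained in A. If σ is not totally imprisoned in any compact set (there is no compact K ⊆ M such that σ eventually enters and remains inside K), then the image of σ meets every singular neighborhood, and consequently σ has an accumulation point in (M̄, 𝒯_sap) belonging to 𝒮. -/

import Mathlib

open scoped Manifold
open Set Filter Topology

universe u

/-- An *envelopment* of a manifold `M` (modelled on `I`): a smooth embedding of `M` into a
smooth manifold of the same dimension (same model), whose target is Hausdorff, connected and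
paracompact; being an embedding of equidimensional manifolds, its image is open. -/
structure Envelopment {E H : Type u} [NormedAddCommGroup E] [NormedSpace ℝ E]
    [TopologicalSpace H] (I : ModelWithCorners ℝ E H)
    (M : Type u) [TopologicalSpace M] [ChartedSpace H M] : Type (u + 1) where
  carrier : Type u
  [ts : TopologicalSpace carrier]
  [t2 : T2Space carrier]
  [conn : ConnectedSpace carrier]
  [pc : ParacompactSpace carrier]
  [cs : ChartedSpace H carrier]
  [sm : IsManifold I (⊤ : ℕ∞) carrier]
  map : M → carrier
  smooth : ContMDiff I I (⊤ : ℕ∞) map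
  immersion : ∀ x : M, Function.Injective (mfderiv I I map x)
  emb : IsOpenEmbedding map

attribute [instance] Envelopment.ts Envelopment.t2 Envelopment.conn Envelopment.pc
  Envelopment.cs Envelopment.sm

variable {E H : Type u} [NormedAddCommGroup E] [NormedSpace ℝ E] [TopologicalSpace H]
variable {I : ModelWithCorners ℝ E H}
variable {M : Type u} [TopologicalSpace M] [ChartedSpace H M]

/-- A *boundary set*: a nonempty subset of the topological boundary `∂φ(M)` of the image of an
envelopment `φ`. -/
structure BoundarySet {E H : Type u} [NormedAddCommGroup E] [NormedSpace ℝ E]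
    [TopologicalSpace H] (I : ModelWithCorners ℝ E H)
    (M : Type u) [TopologicalSpace M] [ChartedSpace H M] : Type (u + 1) where
  env : Envelopment I M
  set : Set env.carrier
  nonempty : set.Nonempty
  subset_frontier : set ⊆ frontier (Set.range env.map)

/-- `B` covers `B'` (written `B ▷ B'`): for every open neighbourhood `N` of `B` there is an
open neighbourhood `N'` of `B'` with `φ(φ'⁻¹(N' ∩ φ'(M))) ⊆ N`. -/
def Covers (B B' : BoundarySet I M) : Prop :=
  ∀ N : Set B.env.carrier, IsOpen N → B.set ⊆ N →
    ∃ N' : Set B'.env.carrier, IsOpen N' ∧ B'.set ⊆ N' ∧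
      B.env.map '' (B'.env.map ⁻¹' N') ⊆ N

theorem covers_refl (B : BoundarySet I M) : Covers B B :=
  fun N hN hBN => ⟨N, hN, hBN, Set.image_preimage_subset _ _⟩

theorem covers_trans {B B' B'' : BoundarySet I M} (h : Covers B B') (h' : Covers B' B'') :
    Covers B B'' := by
  intro N hN hBN
  obtain ⟨N', hN', hB'N', hsub⟩ := h N hN hBN
  obtain ⟨N'', hN'', hB''N'', hsub'⟩ := h' N' hN' hB'N'
  refine ⟨N'', hN'', hB''N'', ?_⟩
  rintro x ⟨m, hm, rfl⟩
  exact hsub ⟨m, hsub' ⟨m, hm, rfl⟩, rfl⟩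

/-- Boundary sets are equivalent when each covers the other. -/
def bsSetoid {E H : Type u} [NormedAddCommGroup E] [NormedSpace ℝ E]
    [TopologicalSpace H] (I : ModelWithCorners ℝ E H)
    (M : Type u) [TopologicalSpace M] [ChartedSpace H M] : Setoid (BoundarySet I M) where
  r B B' := Covers B B' ∧ Covers B' B
  iseqv := ⟨fun B => ⟨covers_refl B, covers_refl B⟩, fun h => ⟨h.2, h.1⟩,
    fun h h' => ⟨covers_trans h.1 h'.1, covers_trans h'.2 h.2⟩⟩

/-- An equivalence class of boundary sets is an *abstract boundary point* when it has a
singleton representative under some envelopment. -/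
def IsAbstractPoint (q : Quotient (bsSetoid I M)) : Prop :=
  ∃ B : BoundarySet I M, Quotient.mk (bsSetoid I M) B = q ∧ ∃ p, B.set = {p}

/-- The abstract boundary `𝓑(M)`: all abstract boundary points. -/
def AbstractBoundary {E H : Type u} [NormedAddCommGroup E] [NormedSpace ℝ E]
    [TopologicalSpace H] (I : ModelWithCorners ℝ E H)
    (M : Type u) [TopologicalSpace M] [ChartedSpace H M] :=
  {q : Quotient (bsSetoid I M) // IsAbstractPoint q}

/-- The singleton boundary set `{p}` at a boundary point `p` of an envelopment. -/
def singletonBS (e : Envelopment I M) {p : e.carrier}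
    (hp : p ∈ frontier (Set.range e.map)) : BoundarySet I M :=
  ⟨e, {p}, Set.singleton_nonempty p, Set.singleton_subset_iff.mpr hp⟩

/-- The abstract boundary point `[p]` determined by a boundary point `p` of an envelopment. -/
def absOf (e : Envelopment I M) {p : e.carrier}
    (hp : p ∈ frontier (Set.range e.map)) : AbstractBoundary I M :=
  ⟨Quotient.mk (bsSetoid I M) (singletonBS e hp), singletonBS e hp, rfl, p, rfl⟩

/-- A boundary set `B ⊆ ∂φ(M)` is *strongly attached* to an open `U ⊆ M` when some open
`N ⊇ B` satisfies `N ∩ φ(M) ⊆ φ(U)`. -/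
def StronglyAttached (B : BoundarySet I M) (U : Set M) : Prop :=
  ∃ N : Set B.env.carrier, IsOpen N ∧ B.set ⊆ N ∧
    N ∩ Set.range B.env.map ⊆ B.env.map '' U

/-- An abstract boundary point is strongly attached to `U` when its representatives are. -/
def AbsStronglyAttached (x : AbstractBoundary I M) (U : Set M) : Prop :=
  ∀ B : BoundarySet I M, Quotient.mk (bsSetoid I M) B = x.1 → StronglyAttached B U

/-- `𝓑_U`: the set of abstract boundary points strongly attached to `U`. -/
def absAttachedSet (I : ModelWithCorners ℝ E H) (M : Type u) [TopologicalSpace M]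
    [ChartedSpace H M] (U : Set M) : Set (AbstractBoundary I M) :=
  {x | AbsStronglyAttached x U}

/-- `M̄ = M ∪ 𝓑(M)`. -/
def Mbar {E H : Type u} [NormedAddCommGroup E] [NormedSpace ℝ E]
    [TopologicalSpace H] (I : ModelWithCorners ℝ E H)
    (M : Type u) [TopologicalSpace M] [ChartedSpace H M] :=
  M ⊕ AbstractBoundary I M

/-- The strongly attached point topology `𝒯_sap` on `M̄`, generated by the basis
`{U ∪ 𝓑_U : U ⊆ M open}`. -/
instance : TopologicalSpace (Mbar I M) :=
  TopologicalSpace.generateFrom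
    {s | ∃ U : Set M, IsOpen U ∧
      s = Sum.inl '' U ∪ Sum.inr '' absAttachedSet I M U}

/-- An open `U ⊆ M` is a *singular neighbourhood* (w.r.t. a distinguished set `𝒮` of abstract
boundary points) when every point of `𝒮` is strongly attached to `U`. -/
def SingularNbhd (𝒮 : Set (AbstractBoundary I M)) (U : Set M) : Prop :=
  IsOpen U ∧ ∀ x ∈ 𝒮, AbsStronglyAttached x U

/-- A closed `A ⊆ M` is *singularly compact* when `A \ U` is compact for every singular
neighbourhood `U`. -/
def SingularlyCompact (𝒮 : Set (AbstractBoundary I M)) (A : Set M) : Prop :=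
  IsClosed A ∧ ∀ U : Set M, SingularNbhd 𝒮 U → IsCompact (A \ U)

/-- Inclusion of `M` into `M̄`. -/
def Mbar.ofM {E H : Type u} [NormedAddCommGroup E] [NormedSpace ℝ E]
    [TopologicalSpace H] {I : ModelWithCorners ℝ E H}
    {M : Type u} [TopologicalSpace M] [ChartedSpace H M] (p : M) : Mbar I M :=
  Sum.inl p

/-- Inclusion of the abstract boundary `𝓑(M)` into `M̄`. -/
def Mbar.ofB {E H : Type u} [NormedAddCommGroup E] [NormedSpace ℝ E]
    [TopologicalSpace H] {I : ModelWithCorners ℝ E H}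
    {M : Type u} [TopologicalSpace M] [ChartedSpace H M] (x : AbstractBoundary I M) :
    Mbar I M :=
  Sum.inr x

theorem stronglyAttached_mono {B : BoundarySet I M} {U U' : Set M} (hUU : U ⊆ U')
    (h : StronglyAttached B U) : StronglyAttached B U' := by
  obtain ⟨N, hNo, hBN, hNs⟩ := h
  exact ⟨N, hNo, hBN, hNs.trans (Set.image_mono hUU)⟩

theorem absStronglyAttached_mono {x : AbstractBoundary I M} {U U' : Set M} (hUU : U ⊆ U')
    (h : AbsStronglyAttached x U) : AbsStronglyAttached x U' :=
  fun B hB => stronglyAttached_mono hUU (h B hB)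

theorem absStronglyAttached_univ (x : AbstractBoundary I M) :
    AbsStronglyAttached x Set.univ := by
  intro B _
  exact ⟨Set.univ, isOpen_univ, Set.subset_univ _, by simp⟩

theorem absStronglyAttached_inter {x : AbstractBoundary I M} {U V : Set M}
    (hU : AbsStronglyAttached x U) (hV : AbsStronglyAttached x V) :
    AbsStronglyAttached x (U ∩ V) := by
  intro B hB
  obtain ⟨N, hNo, hBN, hNs⟩ := hU B hB
  obtain ⟨N', hN'o, hBN', hN's⟩ := hV B hB
  refine ⟨N ∩ N', hNo.inter hN'o, Set.subset_inter hBN hBN', ?_⟩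
  rintro y ⟨⟨hyN, hyN'⟩, hyr⟩
  rw [Set.image_inter B.env.emb.injective]
  exact ⟨hNs ⟨hyN, hyr⟩, hN's ⟨hyN', hyr⟩⟩

theorem open_boundary_attached {O : Set (Mbar I M)} (hO : IsOpen O)
    (x : AbstractBoundary I M) (hx : Sum.inr x ∈ O) :
    ∃ V : Set M, IsOpen V ∧ AbsStronglyAttached x V ∧ Sum.inl '' V ⊆ O := by
  have hO' : TopologicalSpace.GenerateOpen
      {s | ∃ U : Set M, IsOpen U ∧
        s = Sum.inl '' U ∪ Sum.inr '' absAttachedSet I M U} O := hO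
  clear hO
  induction hO' with
  | basic s hs =>
      obtain ⟨U, hUo, rfl⟩ := hs
      refine ⟨U, hUo, ?_, Set.subset_union_left⟩
      rcases hx with h | h
      · obtain ⟨p, _, hp⟩ := h; exact absurd hp (by simp)
      · obtain ⟨y, hy, hyx⟩ := h
        rwa [show y = x from Sum.inr.inj hyx] at hy
  | univ => exact ⟨Set.univ, isOpen_univ, absStronglyAttached_univ x, Set.subset_univ _⟩
  | inter O₁ O₂ _ _ ih₁ ih₂ =>
      obtain ⟨V₁, hV₁o, hV₁a, hV₁s⟩ := ih₁ hx.1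
      obtain ⟨V₂, hV₂o, hV₂a, hV₂s⟩ := ih₂ hx.2
      refine ⟨V₁ ∩ V₂, hV₁o.inter hV₂o, absStronglyAttached_inter hV₁a hV₂a, ?_⟩
      rintro y ⟨p, ⟨hp₁, hp₂⟩, rfl⟩
      exact ⟨hV₁s ⟨p, hp₁, rfl⟩, hV₂s ⟨p, hp₂, rfl⟩⟩
  | sUnion s _ ih =>
      obtain ⟨t, hts, hxt⟩ := hx
      obtain ⟨V, hVo, hVa, hVs⟩ := ih t hts hxt
      exact ⟨V, hVo, hVa, hVs.trans (Set.subset_sUnion_of_mem hts)⟩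

/-- If a continuous curve `σ : [0, b) → M` whose image lies in a singularly compact set `A` is
not totally imprisoned in any compact set, then `σ` meets every singular neighbourhood, and
consequently `σ` has an accumulation point in `(M̄, 𝒯_sap)` belonging to `𝒮`. -/
theorem curve_not_totally_imprisoned_acc_singularity
    {E H : Type u} [NormedAddCommGroup E] [NormedSpace ℝ E] [TopologicalSpace H]
    {I : ModelWithCorners ℝ E H} {M : Type u} [TopologicalSpace M] [ChartedSpace H M]
    [IsManifold I (⊤ : ℕ∞) M] [T2Space M] [ConnectedSpace M] [ParacompactSpace M]
    (𝒮 : Set (AbstractBoundary I M)) (A : Set M) (hA : SingularlyCompact 𝒮 A)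
    (b : EReal) (hb : 0 < b) (σ : ℝ → M)
    (hσ : ContinuousOn σ {t : ℝ | 0 ≤ t ∧ (t : EReal) < b})
    (himg : ∀ t : ℝ, 0 ≤ t → (t : EReal) < b → σ t ∈ A)
    (himp : ¬ ∃ K : Set M, IsCompact K ∧ ∃ t₀ : ℝ, 0 ≤ t₀ ∧ (t₀ : EReal) < b ∧
        ∀ t : ℝ, t₀ ≤ t → (t : EReal) < b → σ t ∈ K) :
    (∀ U : Set M, SingularNbhd 𝒮 U →
        ∃ t : ℝ, 0 ≤ t ∧ (t : EReal) < b ∧ σ t ∈ U) ∧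
      ∃ x ∈ 𝒮, AccPt (Mbar.ofB x)
        (Filter.principal (Mbar.ofM '' (σ '' {t : ℝ | 0 ≤ t ∧ (t : EReal) < b}))) := by
  have hb0 : ((0 : ℝ) : EReal) < b := by exact_mod_cast hb
  have part1 : ∀ U : Set M, SingularNbhd 𝒮 U →
      ∃ t : ℝ, 0 ≤ t ∧ (t : EReal) < b ∧ σ t ∈ U := by
    intro U hU
    by_contra h
    push_neg at h
    exact himp ⟨A \ U, hA.2 U hU, 0, le_refl 0, hb0,
      fun t ht htb => ⟨himg t ht htb, h t ht htb⟩⟩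
  refine ⟨part1, ?_⟩
  by_contra h
  push_neg at h
  have key : ∀ x ∈ 𝒮, ∃ V : Set M, IsOpen V ∧ AbsStronglyAttached x V ∧
      ∀ t : ℝ, 0 ≤ t → (t : EReal) < b → σ t ∉ V := by
    intro x hx
    have hnacc := h x hx
    rw [accPt_iff_nhds] at hnacc
    push_neg at hnacc
    obtain ⟨N, hN, hNempty⟩ := hnacc
    obtain ⟨O, hON, hOopen, hxO⟩ := mem_nhds_iff.mp hN
    obtain ⟨V, hVo, hVa, hVs⟩ := open_boundary_attached hOopen x hxO
    refine ⟨V, hVo, hVa, ?_⟩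
    intro t ht htb hσV
    have hmem : Sum.inl (σ t) ∈ N ∩ Mbar.ofM '' (σ '' {t : ℝ | 0 ≤ t ∧ (t : EReal) < b}) :=
      ⟨hON (hVs ⟨σ t, hσV, rfl⟩), ⟨σ t, ⟨t, ⟨ht, htb⟩, rfl⟩, rfl⟩⟩
    exact Sum.inl_ne_inr (hNempty _ hmem)
  choose! V hVo hVa hVm using key
  set U : Set M := ⋃ x ∈ 𝒮, V x with hUdef
  have hUsn : SingularNbhd 𝒮 U := by
    refine ⟨isOpen_biUnion fun x hx => hVo x hx, fun x hx => ?_⟩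
    exact absStronglyAttached_mono (Set.subset_biUnion_of_mem hx) (hVa x hx)
  obtain ⟨t, ht, htb, htU⟩ := part1 U hUsn
  obtain ⟨_, ⟨x, rfl⟩, _, ⟨hx, rfl⟩, htV⟩ := htU
  exact hVm x hx t ht htb htV
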